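/- Let U be a sub-Markovian resolvent of kernels with initial kernel U and ξ a U-excessive measure. If for every strictly positive measurable f with ξ(f)<∞ one has Uf<∞ ξ-a.e., then there exists F ∈ B with ξ(E∖F)=0, U(1_{E∖F})=0 on F, and the restricted resolvent U|_F proper (i.e. there is a strictly positive bounded measurable g on F with (U|_F)g ≤ 1). -/

import Mathlib

open MeasureTheory ProbabilityTheory ENNReal Set Filter

variable {E : Type*} [MeasurableSpace E]

/-- The action of the kernel `U α` on nonnegative measurable functions. -/
noncomputable def resOp (U : ℝ → ProbabilityTheory.Kernel E E) (α : ℝ)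
    (f : E → ℝ≥0∞) (x : E) : ℝ≥0∞ := ∫⁻ y, f y ∂(U α x)

/-- A sub-Markovian resolvent of kernels: `α U_α 1 ≤ 1` and the resolvent equation
`U_α = U_β + (β-α) U_α U_β` for `0 < α ≤ β`. -/
def IsSubMarkovResolvent (U : ℝ → ProbabilityTheory.Kernel E E) : Prop :=
  (∀ α : ℝ, 0 < α → ∀ x : E, ENNReal.ofReal α * (U α x) Set.univ ≤ 1) ∧
  (∀ α β : ℝ, 0 < α → α ≤ β → ∀ f : E → ℝ≥0∞, Measurable f → ∀ x : E,
    resOp U α f x = resOp U β f x + ENNReal.ofReal (β - α) * resOp U α (resOp U β f) x)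

/-- The initial kernel `U = sup_{α>0} U_α` acting on functions. -/
noncomputable def iniOp (U : ℝ → ProbabilityTheory.Kernel E E) (f : E → ℝ≥0∞) (x : E) : ℝ≥0∞ :=
  ⨆ (α : ℝ) (_ : 0 < α), resOp U α f x

/-- `s` is `U`-supermedian: `α U_α s ≤ s` for all `α > 0`. -/
def IsSupermedian (U : ℝ → ProbabilityTheory.Kernel E E) (s : E → ℝ≥0∞) : Prop :=
  ∀ α : ℝ, 0 < α → ∀ x, ENNReal.ofReal α * resOp U α s x ≤ s x

/-- The regularization `ŝ(x) = sup_{α>0} α U_α s (x)`. -/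
noncomputable def hatOp (U : ℝ → ProbabilityTheory.Kernel E E) (s : E → ℝ≥0∞) (x : E) : ℝ≥0∞ :=
  ⨆ (α : ℝ) (_ : 0 < α), ENNReal.ofReal α * resOp U α s x

/-- `s` is `U`-excessive: supermedian and `sup_{α>0} α U_α s = s`. -/
def IsExcessiveFn (U : ℝ → ProbabilityTheory.Kernel E E) (s : E → ℝ≥0∞) : Prop :=
  IsSupermedian U s ∧ ∀ x, hatOp U s x = s x

/-- The shifted resolvent `U_β = (U_{β+α})_{α>0}`. -/
def shiftRes (U : ℝ → ProbabilityTheory.Kernel E E) (β : ℝ) :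
    ℝ → ProbabilityTheory.Kernel E E := fun α => U (β + α)

/-- `ξ` is a `U`-excessive measure: `ξ ∘ (α U_α) ≤ ξ` for all `α > 0`. -/
def IsExcessiveMeas (U : ℝ → ProbabilityTheory.Kernel E E) (ξ : Measure E) : Prop :=
  ∀ α : ℝ, 0 < α → ENNReal.ofReal α • ξ.bind (U α) ≤ ξ

/-- The measure `μ ∘ U`, where `U` is the initial kernel `sup_{α>0} U_α`. -/
noncomputable def potMeas (U : ℝ → ProbabilityTheory.Kernel E E) (μ : Measure E) : Measure E :=
  ⨆ (α : ℝ) (_ : 0 < α), μ.bind (U α)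

/-- `ξ` is purely excessive: excessive and `inf_{α>0} ξ ∘ (α U_α) = 0`. -/
def IsPurelyExcessiveMeas (U : ℝ → ProbabilityTheory.Kernel E E) (ξ : Measure E) : Prop :=
  IsExcessiveMeas U ξ ∧ ∀ s : Set E, MeasurableSet s →
    (⨅ (α : ℝ) (_ : 0 < α), (ENNReal.ofReal α • ξ.bind (U α)) s) = 0

/-- The set of non-branch points with respect to `U`. -/
def nonBranch (U : ℝ → ProbabilityTheory.Kernel E E) : Set E :=
  {x | (∀ s t : E → ℝ≥0∞, IsExcessiveFn U s → IsExcessiveFn U t →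
      hatOp U (fun y => min (s y) (t y)) x = min (s x) (t x)) ∧
    hatOp U (fun _ => (1 : ℝ≥0∞)) x = 1}

section Aux

open ProbabilityTheory

variable {U : ℝ → ProbabilityTheory.Kernel E E}

lemma isFiniteKernel_of_subMarkov (hU : IsSubMarkovResolvent U) {α : ℝ} (hα : 0 < α) :
    IsFiniteKernel (U α) := by
  refine ⟨⟨(ENNReal.ofReal α)⁻¹, ENNReal.inv_lt_top.2 (ENNReal.ofReal_pos.2 hα), fun x => ?_⟩⟩
  rw [ENNReal.le_inv_iff_mul_le, mul_comm]
  exact hU.1 α hα x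

lemma measurable_resOp (hU : IsSubMarkovResolvent U) {α : ℝ} (hα : 0 < α) {f : E → ℝ≥0∞}
    (hf : Measurable f) : Measurable (resOp U α f) := by
  haveI := isFiniteKernel_of_subMarkov hU hα
  exact Measurable.lintegral_kernel hf

lemma resOp_mono {α : ℝ} {f g : E → ℝ≥0∞} (h : ∀ y, f y ≤ g y) (x : E) :
    resOp U α f x ≤ resOp U α g x := lintegral_mono h

lemma resOp_le_const (hU : IsSubMarkovResolvent U) {α : ℝ} (hα : 0 < α) {f : E → ℝ≥0∞}
    {C : ℝ≥0∞} (hf : ∀ y, f y ≤ C) (x : E) :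
    resOp U α f x ≤ C * (ENNReal.ofReal α)⁻¹ := by
  refine (lintegral_mono hf).trans ?_
  rw [lintegral_const]
  refine mul_le_mul_right ?_ C
  rw [ENNReal.le_inv_iff_mul_le, mul_comm]
  exact hU.1 α hα x

lemma resOp_le_one_of_le_one (hU : IsSubMarkovResolvent U) {f : E → ℝ≥0∞}
    (hf : ∀ y, f y ≤ 1) (x : E) : resOp U 1 f x ≤ 1 := by
  have := resOp_le_const hU one_pos hf x
  simpa using this

lemma resOp_add {α : ℝ} {f g : E → ℝ≥0∞} (hf : Measurable f) (x : E) :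
    resOp U α (fun y => f y + g y) x = resOp U α f x + resOp U α g x :=
  lintegral_add_left hf _

lemma resOp_const_mul {α : ℝ} {f : E → ℝ≥0∞} (hf : Measurable f) (c : ℝ≥0∞) (x : E) :
    resOp U α (fun y => c * f y) x = c * resOp U α f x :=
  lintegral_const_mul c hf

lemma res_id (hU : IsSubMarkovResolvent U) {p q : ℝ} (hp : 0 < p) (hpq : p ≤ q)
    {f : E → ℝ≥0∞} (hf : Measurable f) (x : E) :
    resOp U p f x = resOp U q f x + ENNReal.ofReal (q - p) * resOp U p (resOp U q f) x :=
  hU.2 p q hp hpq f hf x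

lemma resOp_anti (hU : IsSubMarkovResolvent U) {p q : ℝ} (hp : 0 < p) (hpq : p ≤ q)
    {f : E → ℝ≥0∞} (hf : Measurable f) (x : E) :
    resOp U q f x ≤ resOp U p f x := by
  rw [res_id hU hp hpq hf x]; exact le_self_add

lemma iniOp_eq_iSup_nat (hU : IsSubMarkovResolvent U) {f : E → ℝ≥0∞} (hf : Measurable f)
    (x : E) : iniOp U f x = ⨆ k : ℕ, resOp U (1/(k+1)) f x := by
  apply le_antisymm
  · refine iSup₂_le fun α hα => ?_
    obtain ⟨k, hk⟩ := exists_nat_one_div_lt hα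
    exact (resOp_anti hU (by positivity) hk.le hf x).trans (le_iSup (fun k : ℕ => resOp U (1/(k+1) : ℝ) f x) k)
  · exact iSup_le fun k =>
      le_iSup₂ (f := fun (α : ℝ) (_ : 0 < α) => resOp U α f x) (1/(k+1) : ℝ) (by positivity)

end Aux
section Aux2

open ProbabilityTheory

variable {U : ℝ → ProbabilityTheory.Kernel E E}

lemma resOp_comm (hU : IsSubMarkovResolvent U) {γ : ℝ} (h0 : 0 < γ) (h1 : γ ≤ 1)
    {f : E → ℝ≥0∞} (hf : Measurable f) (hfb : ∀ y, f y ≤ 1) (x : E) :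
    resOp U 1 (resOp U γ f) x = resOp U γ (resOp U 1 f) x := by
  rcases eq_or_lt_of_le h1 with rfl | h1
  · rfl
  set d : ℝ≥0∞ := ENNReal.ofReal (1 - γ) with hd
  have hd1 : d < 1 := by
    rw [hd, ← ENNReal.ofReal_one]
    exact (ENNReal.ofReal_lt_ofReal_iff one_pos).2 (by linarith)
  set c0 : ℝ≥0∞ := (ENNReal.ofReal γ)⁻¹ with hc0
  have hc0top : c0 ≠ ⊤ := by
    simp [hc0, (ENNReal.ofReal_pos.2 h0).ne']
  have hmA : ∀ {g : E → ℝ≥0∞}, Measurable g → Measurable (resOp U 1 g) :=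
    fun hg => measurable_resOp hU one_pos hg
  have hmB : ∀ {g : E → ℝ≥0∞}, Measurable g → Measurable (resOp U γ g) :=
    fun hg => measurable_resOp hU h0 hg
  have hbA : ∀ {g : E → ℝ≥0∞}, (∀ y, g y ≤ 1) → ∀ y, resOp U 1 g y ≤ 1 :=
    fun hg y => resOp_le_one_of_le_one hU hg y
  have hbBc : ∀ {g : E → ℝ≥0∞}, (∀ y, g y ≤ 1) → ∀ y, resOp U γ g y ≤ c0 := by
    intro g hg y
    have := resOp_le_const hU h0 hg y
    simpa [hc0] using this
  have hid : ∀ (g : E → ℝ≥0∞), Measurable g → ∀ y,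
      resOp U γ g y = resOp U 1 g y + d * resOp U γ (resOp U 1 g) y :=
    fun g hg y => hU.2 γ 1 h0 h1.le g hg y
  -- split of A applied to the identity
  have hsplit : ∀ (g : E → ℝ≥0∞), Measurable g → ∀ y,
      resOp U 1 (resOp U γ g) y
        = resOp U 1 (resOp U 1 g) y + d * resOp U 1 (resOp U γ (resOp U 1 g)) y := by
    intro g hg y
    have hfun : resOp U γ g = fun z => resOp U 1 g z + d * resOp U γ (resOp U 1 g) z :=
      funext fun z => hid g hg z
    rw [hfun]
    rw [resOp_add (hmA hg) y]
    congr 1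
    exact resOp_const_mul (hmB (hmA hg)) d y
  have P : ∀ k : ℕ, ∀ g : E → ℝ≥0∞, Measurable g → (∀ y, g y ≤ 1) → ∀ y,
      resOp U 1 (resOp U γ g) y ≤ resOp U γ (resOp U 1 g) y + d ^ k * c0 := by
    intro k
    induction k with
    | zero =>
      intro g hg hgb y
      have : resOp U 1 (resOp U γ g) y ≤ c0 := by
        have h1' := resOp_le_const hU one_pos (f := resOp U γ g) (C := c0) (hbBc hgb) y
        simpa using h1'
      simpa using le_add_left this
    | succ k ih =>
      intro g hg hgb y
      have step := hsplit g hg y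
      have ihg := ih (resOp U 1 g) (hmA hg) (hbA hgb) y
      calc resOp U 1 (resOp U γ g) y
          = resOp U 1 (resOp U 1 g) y + d * resOp U 1 (resOp U γ (resOp U 1 g)) y := step
        _ ≤ resOp U 1 (resOp U 1 g) y + d * (resOp U γ (resOp U 1 (resOp U 1 g)) y + d ^ k * c0) := by
            gcongr
        _ = (resOp U 1 (resOp U 1 g) y + d * resOp U γ (resOp U 1 (resOp U 1 g)) y)
              + d ^ (k+1) * c0 := by ring
        _ = resOp U γ (resOp U 1 g) y + d ^ (k+1) * c0 := by
            rw [← hid (resOp U 1 g) (hmA hg) y]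
  have Q : ∀ k : ℕ, ∀ g : E → ℝ≥0∞, Measurable g → (∀ y, g y ≤ 1) → ∀ y,
      resOp U γ (resOp U 1 g) y ≤ resOp U 1 (resOp U γ g) y + d ^ k * c0 := by
    intro k
    induction k with
    | zero =>
      intro g hg hgb y
      have : resOp U γ (resOp U 1 g) y ≤ c0 := hbBc (hbA hgb) y
      simpa using le_add_left this
    | succ k ih =>
      intro g hg hgb y
      have step := hid (resOp U 1 g) (hmA hg) y
      have ihg := ih (resOp U 1 g) (hmA hg) (hbA hgb) y
      calc resOp U γ (resOp U 1 g) y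
          = resOp U 1 (resOp U 1 g) y + d * resOp U γ (resOp U 1 (resOp U 1 g)) y := step
        _ ≤ resOp U 1 (resOp U 1 g) y + d * (resOp U 1 (resOp U γ (resOp U 1 g)) y + d ^ k * c0) := by
            gcongr
        _ = (resOp U 1 (resOp U 1 g) y + d * resOp U 1 (resOp U γ (resOp U 1 g)) y)
              + d ^ (k+1) * c0 := by ring
        _ = resOp U 1 (resOp U γ g) y + d ^ (k+1) * c0 := by
            rw [← hsplit g hg y]
  have htend : Filter.Tendsto (fun k : ℕ => d ^ k * c0) Filter.atTop (nhds 0) := by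
    have h0' : Filter.Tendsto (fun k : ℕ => d ^ k) Filter.atTop (nhds 0) :=
      ENNReal.tendsto_pow_atTop_nhds_zero_of_lt_one hd1
    simpa using ENNReal.Tendsto.mul_const h0' (Or.inr hc0top)
  apply le_antisymm
  · have hlim : Filter.Tendsto (fun k : ℕ => resOp U γ (resOp U 1 f) x + d ^ k * c0)
        Filter.atTop (nhds (resOp U γ (resOp U 1 f) x)) := by
      simpa using Filter.Tendsto.const_add (resOp U γ (resOp U 1 f) x) htend
    exact ge_of_tendsto' hlim (fun k => P k f hf hfb x)
  · have hlim : Filter.Tendsto (fun k : ℕ => resOp U 1 (resOp U γ f) x + d ^ k * c0)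
        Filter.atTop (nhds (resOp U 1 (resOp U γ f) x)) := by
      simpa using Filter.Tendsto.const_add (resOp U 1 (resOp U γ f) x) htend
    exact ge_of_tendsto' hlim (fun k => Q k f hf hfb x)

lemma key_ineq (hU : IsSubMarkovResolvent U) {h : E → ℝ≥0∞} (hh : Measurable h)
    (hb : ∀ y, h y ≤ 1) (x : E) :
    resOp U 1 h x + resOp U 1 (fun y => ⨆ k : ℕ, resOp U (1/(k+1)) h y) x
      ≤ ⨆ k : ℕ, resOp U (1/(k+1)) h x := by
  have hpos : ∀ k : ℕ, (0:ℝ) < 1/(k+1) := fun k => by positivity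
  have hle1 : ∀ k : ℕ, (1/(k+1) : ℝ) ≤ 1 := fun k => by
    rw [div_le_one (by positivity)]
    simp
  have hmono : Monotone fun (k : ℕ) => resOp U (1/(k+1)) h := by
    intro k k' hkk' y
    exact resOp_anti hU (hpos k') (by
      apply one_div_le_one_div_of_le (by positivity)
      exact_mod_cast add_le_add_left (Nat.cast_le.2 hkk') 1) hh y
  have hU1v : resOp U 1 (fun y => ⨆ k : ℕ, resOp U (1/(k+1)) h y) x
      = ⨆ k : ℕ, resOp U (1/(k+1)) (resOp U 1 h) x := by
    rw [show (fun y => ⨆ k : ℕ, resOp U (1/(k+1)) h y)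
        = fun y => ⨆ k : ℕ, (fun j : ℕ => resOp U (1/(j+1)) h) k y from rfl]
    rw [resOp, lintegral_iSup (fun k => measurable_resOp hU (hpos k) hh) hmono]
    congr 1
    funext k
    exact resOp_comm hU (hpos k) (hle1 k) hh hb x
  rw [hU1v, ENNReal.add_iSup]
  refine iSup_le fun k => ?_
  set W := resOp U (1/(k+1)) (resOp U 1 h) x with hW
  have hWfin : W ≠ ⊤ := by
    refine ne_top_of_le_ne_top ?_ (resOp_le_const hU (hpos k)
      (C := 1) (fun y => resOp_le_one_of_le_one hU hb y) x)
    have hne : ENNReal.ofReal (1/(k+1)) ≠ 0 := (ENNReal.ofReal_pos.2 (hpos k)).ne'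
    simp only [one_mul, ENNReal.inv_ne_top]
    positivity
  have hterm : ∀ j : ℕ, k ≤ j →
      resOp U 1 h x + ENNReal.ofReal (1 - 1/(j+1)) * W ≤ ⨆ m : ℕ, resOp U (1/(m+1)) h x := by
    intro j hkj
    have hid := hU.2 (1/(j+1)) 1 (hpos j) (hle1 j) h hh x
    have hWj : W ≤ resOp U (1/(j+1)) (resOp U 1 h) x := by
      refine resOp_anti hU (hpos j) ?_ (measurable_resOp hU one_pos hh) x
      apply one_div_le_one_div_of_le (by positivity)
      exact_mod_cast add_le_add_left (Nat.cast_le.2 hkj) 1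
    calc resOp U 1 h x + ENNReal.ofReal (1 - 1/(j+1)) * W
        ≤ resOp U 1 h x + ENNReal.ofReal (1 - 1/(j+1)) * resOp U (1/(j+1)) (resOp U 1 h) x := by
          gcongr
      _ = resOp U (1/(j+1)) h x := hid.symm
      _ ≤ ⨆ m : ℕ, resOp U (1/(m+1)) h x := le_iSup (fun m : ℕ => resOp U (1/(m+1) : ℝ) h x) j
  have hlim : Filter.Tendsto (fun j : ℕ => resOp U 1 h x + ENNReal.ofReal (1 - 1/(j+1)) * W)
      Filter.atTop (nhds (resOp U 1 h x + W)) := by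
    have hreal : Filter.Tendsto (fun j : ℕ => (1 - 1/(j+1) : ℝ)) Filter.atTop (nhds 1) := by
      have := tendsto_one_div_add_atTop_nhds_zero_nat (𝕜 := ℝ)
      have h2 := Filter.Tendsto.const_sub (1:ℝ) this
      simpa using h2
    have hofreal : Filter.Tendsto (fun j : ℕ => ENNReal.ofReal (1 - 1/(j+1))) Filter.atTop
        (nhds 1) := by
      have := ENNReal.tendsto_ofReal hreal
      simpa using this
    have hmul : Filter.Tendsto (fun j : ℕ => ENNReal.ofReal (1 - 1/(j+1)) * W) Filter.atTop
        (nhds W) := by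
      have := ENNReal.Tendsto.mul_const (b := W) hofreal (Or.inl one_ne_zero)
      simpa using this
    exact Filter.Tendsto.const_add _ hmul
  exact le_of_tendsto hlim (Filter.eventually_atTop.2 ⟨k, hterm⟩)

end Aux2
section Aux3

open ProbabilityTheory

variable {U : ℝ → ProbabilityTheory.Kernel E E}

lemma dead_zero (hU : IsSubMarkovResolvent U) {h : E → ℝ≥0∞} (hh : Measurable h)
    (hpos : ∀ y, 0 < h y) {x : E} (hx : resOp U 1 h x = 0) {α : ℝ} (hα : 0 < α) :
    resOp U α (fun _ => (1:ℝ≥0∞)) x = 0 := by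
  have huniv : (U 1 x) Set.univ = 0 := by
    have hae : h =ᵐ[U 1 x] 0 := (lintegral_eq_zero_iff hh).1 hx
    have : (U 1 x) {y | ¬ h y = 0} = 0 := hae
    have huniv' : {y | ¬ h y = 0} = Set.univ :=
      Set.eq_univ_of_forall fun y => (hpos y).ne'
    rwa [huniv'] at this
  have h11 : resOp U 1 (fun _ => (1:ℝ≥0∞)) x = 0 := by
    rw [resOp, lintegral_one, huniv]
  rcases le_or_gt 1 α with hα1 | hα1
  · exact le_antisymm ((resOp_anti hU one_pos hα1 measurable_const x).trans h11.le) zero_le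
  · set t := resOp U α (fun _ => (1:ℝ≥0∞)) x with ht
    have htfin : t ≠ ⊤ := by
      refine ne_top_of_le_ne_top ?_ (resOp_le_const hU hα (C := 1) (fun _ => le_rfl) x)
      simp only [one_mul, ENNReal.inv_ne_top]
      exact (ENNReal.ofReal_pos.2 hα).ne'
    have hid := hU.2 α 1 hα hα1.le (fun _ => (1:ℝ≥0∞)) measurable_const x
    have hinner : resOp U α (resOp U 1 (fun _ => (1:ℝ≥0∞))) x ≤ t :=
      resOp_mono (fun y => resOp_le_one_of_le_one hU (fun _ => le_rfl) y) x
    have hle : t ≤ ENNReal.ofReal (1 - α) * t := by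
      calc t = resOp U 1 (fun _ => (1:ℝ≥0∞)) x
            + ENNReal.ofReal (1 - α) * resOp U α (resOp U 1 (fun _ => (1:ℝ≥0∞))) x := hid
        _ ≤ 0 + ENNReal.ofReal (1 - α) * t := by rw [h11]; gcongr
        _ = ENNReal.ofReal (1 - α) * t := by rw [zero_add]
    by_contra hne
    have ht0 : t ≠ 0 := hne
    have hd1 : ENNReal.ofReal (1 - α) < 1 := by
      rw [← ENNReal.ofReal_one]
      exact (ENNReal.ofReal_lt_ofReal_iff one_pos).2 (by linarith)
    have : ENNReal.ofReal (1 - α) * t < 1 * t :=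
      (ENNReal.mul_lt_mul_iff_left ht0 htfin).2 hd1
    rw [one_mul] at this
    exact absurd (hle.trans_lt this) (lt_irrefl t)

lemma potential_dead_zero (hU : IsSubMarkovResolvent U) {h : E → ℝ≥0∞} (hh : Measurable h)
    (hpos : ∀ y, 0 < h y) {β : ℝ} (hβ : 0 < β) (x : E) :
    resOp U β (({z | resOp U 1 h z = 0}).indicator 1) x = 0 := by
  set Z := {z | resOp U 1 h z = 0} with hZ
  have hZmeas : MeasurableSet Z :=
    measurable_resOp hU one_pos hh (measurableSet_singleton 0)
  have hindmeas : Measurable (Z.indicator (1 : E → ℝ≥0∞)) :=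
    measurable_one.indicator hZmeas
  set t := resOp U β (Z.indicator 1) x with htdef
  have htfin : t ≠ ⊤ := by
    refine ne_top_of_le_ne_top ?_ (resOp_le_const hU hβ (C := 1)
      (fun y => by classical by_cases hy : y ∈ Z <;> simp [hy]) x)
    simp only [one_mul, ENNReal.inv_ne_top]
    exact (ENNReal.ofReal_pos.2 hβ).ne'
  have hbound : ∀ m : ℕ, β < m → t ≤ (ENNReal.ofReal m)⁻¹ := by
    intro m hm
    have hmpos : (0:ℝ) < m := hβ.trans hm
    -- pointwise: indicator + ofReal m * resOp U m 1 ≤ 1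
    have hpt : ∀ y, Z.indicator (1 : E → ℝ≥0∞) y
        + ENNReal.ofReal m * resOp U m (fun _ => (1:ℝ≥0∞)) y ≤ 1 := by
      intro y
      by_cases hy : y ∈ Z
      · rw [Set.indicator_of_mem hy, dead_zero hU hh hpos hy hmpos]
        simp
      · rw [Set.indicator_of_notMem hy, zero_add, resOp, lintegral_one]
        exact hU.1 m hmpos y
    have happly : resOp U β (fun y => Z.indicator (1 : E → ℝ≥0∞) y
        + ENNReal.ofReal m * resOp U m (fun _ => (1:ℝ≥0∞)) y) x
        ≤ resOp U β (fun _ => (1:ℝ≥0∞)) x := resOp_mono hpt x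
    have hsplit : resOp U β (fun y => Z.indicator (1 : E → ℝ≥0∞) y
        + ENNReal.ofReal m * resOp U m (fun _ => (1:ℝ≥0∞)) y) x
        = t + ENNReal.ofReal m * resOp U β (resOp U m (fun _ => (1:ℝ≥0∞))) x := by
      rw [resOp_add hindmeas x]
      congr 1
      exact resOp_const_mul (measurable_resOp hU hmpos measurable_const) _ x
    set X := resOp U β (resOp U m (fun _ => (1:ℝ≥0∞))) x with hX
    have hXfin : ENNReal.ofReal m * X ≠ ⊤ := by
      have hXle : X ≤ (ENNReal.ofReal m)⁻¹ * (ENNReal.ofReal β)⁻¹ := by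
        refine resOp_le_const hU hβ (C := (ENNReal.ofReal m)⁻¹) (fun y => ?_) x
        have := resOp_le_const hU hmpos (C := 1) (fun _ => le_rfl) y
        rwa [one_mul] at this
      have hm0 : m ≠ 0 := (Nat.cast_pos.1 hmpos).ne'
      refine ENNReal.mul_ne_top ENNReal.ofReal_ne_top (ne_top_of_le_ne_top ?_ hXle)
      exact ENNReal.mul_ne_top (by simp [(ENNReal.ofReal_pos.2 hmpos).ne', hm0])
        (by simp [(ENNReal.ofReal_pos.2 hβ).ne'])
    have hid := hU.2 β m hβ hm.le (fun _ => (1:ℝ≥0∞)) measurable_const x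
    -- t + ofReal m * X ≤ resOp U β 1 x = resOp U m 1 x + ofReal (m - β) * X
    have hchain : t + ENNReal.ofReal m * X
        ≤ resOp U m (fun _ => (1:ℝ≥0∞)) x + ENNReal.ofReal m * X := by
      calc t + ENNReal.ofReal m * X = resOp U β (fun y => Z.indicator (1 : E → ℝ≥0∞) y
            + ENNReal.ofReal m * resOp U m (fun _ => (1:ℝ≥0∞)) y) x := hsplit.symm
        _ ≤ resOp U β (fun _ => (1:ℝ≥0∞)) x := happly
        _ = resOp U m (fun _ => (1:ℝ≥0∞)) x + ENNReal.ofReal (m - β) * X := hid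
        _ ≤ resOp U m (fun _ => (1:ℝ≥0∞)) x + ENNReal.ofReal m * X :=
            add_le_add_right (mul_le_mul_left (ENNReal.ofReal_le_ofReal (by linarith)) X) _
    have ht' : t ≤ resOp U m (fun _ => (1:ℝ≥0∞)) x :=
      (ENNReal.add_le_add_iff_right hXfin).1 hchain
    refine ht'.trans ?_
    have := resOp_le_const hU hmpos (C := 1) (fun _ => le_rfl) x
    rwa [one_mul] at this
  by_contra hne
  have ht0 : (0:ℝ≥0∞) < t := pos_iff_ne_zero.2 hne
  have hinvfin : t⁻¹ ≠ ⊤ := ENNReal.inv_ne_top.2 ht0.ne'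
  obtain ⟨m, hm⟩ := exists_nat_gt (max β (t⁻¹.toReal))
  have hm1 : β < m := (le_max_left _ _).trans_lt hm
  have hm2 : t⁻¹ < ENNReal.ofReal m :=
    (ENNReal.lt_ofReal_iff_toReal_lt hinvfin).2 ((le_max_right _ _).trans_lt hm)
  have : (ENNReal.ofReal m)⁻¹ < t := by
    rw [← inv_inv (a := t)]
    exact ENNReal.inv_lt_inv.2 hm2
  exact absurd ((hbound m hm1).trans_lt this) (lt_irrefl t)

lemma null_potential (hU : IsSubMarkovResolvent U) {ξ : Measure E}
    (hξ : IsExcessiveMeas U ξ) {M : Set E} (hM : MeasurableSet M) (hM0 : ξ M = 0)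
    {β : ℝ} (hβ : 0 < β) :
    ξ {x | resOp U β (M.indicator 1) x ≠ 0} = 0 := by
  have hmeas : Measurable (resOp U β (M.indicator 1)) :=
    measurable_resOp hU hβ (measurable_one.indicator hM)
  have hbind : (ξ.bind (U β)) M = 0 := by
    have hle := Measure.le_iff'.1 (hξ β hβ) M
    rw [Measure.smul_apply, smul_eq_mul, hM0] at hle
    have h0 := le_antisymm hle zero_le
    exact (mul_eq_zero.1 h0).resolve_left (ENNReal.ofReal_pos.2 hβ).ne'
  have hint : ∫⁻ x, resOp U β (M.indicator 1) x ∂ξ = 0 := by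
    have heq : ∀ x, resOp U β (M.indicator 1) x = (U β x) M := fun x =>
      lintegral_indicator_one hM
    calc ∫⁻ x, resOp U β (M.indicator 1) x ∂ξ = ∫⁻ x, (U β x) M ∂ξ := by
          simp only [heq]
      _ = (ξ.bind (U β)) M := (Measure.bind_apply hM (Kernel.measurable _).aemeasurable).symm
      _ = 0 := hbind
  have hae := (lintegral_eq_zero_iff hmeas).1 hint
  exact hae

end Aux3
section Aux4

open ProbabilityTheory

variable {E : Type u_1} [MeasurableSpace E]

/-- Iterative cleaning: enlarge a null set to an absorbing null set. -/
noncomputable def cleanSeq (U : ℝ → ProbabilityTheory.Kernel E E) (M₀ : Set E) : ℕ → Set E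
  | 0 => M₀
  | (k+1) => cleanSeq U M₀ k ∪
      ⋃ j : ℕ, {x | resOp U (1/(j+1)) ((cleanSeq U M₀ k).indicator 1) x ≠ 0}

variable {U : ℝ → ProbabilityTheory.Kernel E E}

lemma cleanSeq_mono (M₀ : Set E) : Monotone (cleanSeq U M₀) :=
  monotone_nat_of_le_succ fun k => Set.subset_union_left

lemma cleanSeq_meas (hU : IsSubMarkovResolvent U) {M₀ : Set E} (hM₀ : MeasurableSet M₀) :
    ∀ k, MeasurableSet (cleanSeq U M₀ k) := by
  intro k
  induction k with
  | zero => exact hM₀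
  | succ k ih =>
    refine ih.union (MeasurableSet.iUnion fun j => ?_)
    have : MeasurableSet {x | resOp U (1/(j+1)) ((cleanSeq U M₀ k).indicator 1) x = 0} :=
      measurable_resOp hU (by positivity) (measurable_one.indicator ih)
        (measurableSet_singleton 0)
    exact this.compl

lemma cleanSeq_null (hU : IsSubMarkovResolvent U) {ξ : Measure E}
    (hξ : IsExcessiveMeas U ξ) {M₀ : Set E} (hM₀ : MeasurableSet M₀) (h0 : ξ M₀ = 0) :
    ∀ k, ξ (cleanSeq U M₀ k) = 0 := by
  intro k
  induction k with
  | zero => exact h0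
  | succ k ih =>
    refine measure_union_null ih (measure_iUnion_null fun j => ?_)
    exact null_potential hU hξ (cleanSeq_meas hU hM₀ k) ih (by positivity)

lemma cleanSeq_absorb (hU : IsSubMarkovResolvent U) {M₀ : Set E} (hM₀ : MeasurableSet M₀)
    {x : E} (hx : x ∉ ⋃ k, cleanSeq U M₀ k) (k : ℕ) {β : ℝ} (hβ : 0 < β) :
    resOp U β ((cleanSeq U M₀ k).indicator 1) x = 0 := by
  have hx' : x ∉ cleanSeq U M₀ (k+1) := fun h => hx (Set.mem_iUnion.2 ⟨k+1, h⟩)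
  have hj : ∀ j : ℕ, resOp U (1/(j+1)) ((cleanSeq U M₀ k).indicator 1) x = 0 := by
    intro j
    by_contra hne
    exact hx' (Set.mem_union_right _ (Set.mem_iUnion.2 ⟨j, hne⟩))
  obtain ⟨j, hjβ⟩ := exists_nat_one_div_lt hβ
  have := resOp_anti hU (p := 1/(j+1)) (by positivity) hjβ.le
    (measurable_one.indicator (cleanSeq_meas hU hM₀ k)) x
  rw [hj j] at this
  exact le_antisymm this zero_le

end Aux4
/-- STATEMENT 9 (Proposition A1, 2) ⇒ 3)): if for every strictly positive measurable `f`
with `ξ(f) < ∞` one has `Uf < ∞` ξ-a.e., then there is a measurable `F` of full `ξ`-measure,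
absorbing (`U(1_{E∖F}) = 0` on `F`), on which the restricted resolvent is proper. -/
theorem dissipative_gives_proper_restriction
    (U : ℝ → ProbabilityTheory.Kernel E E) (hU : IsSubMarkovResolvent U)
    (ξ : Measure E) [SigmaFinite ξ] (hξ : IsExcessiveMeas U ξ)
    (h2 : ∀ f : E → ℝ≥0∞, Measurable f → (∀ x, 0 < f x) →
      (∫⁻ x, f x ∂ξ) < ⊤ → ∀ᵐ x ∂ξ, iniOp U f x < ⊤) :
    ∃ F : Set E, MeasurableSet F ∧ ξ Fᶜ = 0 ∧
      (∀ x ∈ F, iniOp U (Fᶜ.indicator 1) x = 0) ∧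
      ∃ g : E → ℝ≥0∞, Measurable g ∧ (∀ x ∈ F, 0 < g x) ∧
        (∃ c : ℝ≥0∞, c < ⊤ ∧ ∀ x, g x ≤ c) ∧ ∀ x ∈ F, iniOp U g x ≤ 1 := by
  classical
  obtain ⟨g0, hg0pos, hg0meas, hg0int⟩ := exists_pos_lintegral_lt_of_sigmaFinite ξ one_ne_zero
  set h : E → ℝ≥0∞ := fun x => min (g0 x) 1 with hhdef
  have hh : Measurable h := (measurable_coe_nnreal_ennreal.comp hg0meas).min measurable_const
  have hhpos : ∀ x, 0 < h x := fun x => lt_min (ENNReal.coe_pos.2 (hg0pos x)) one_pos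
  have hhle : ∀ x, h x ≤ 1 := fun x => min_le_right _ _
  have hhint : (∫⁻ x, h x ∂ξ) < ⊤ :=
    (lintegral_mono fun x => min_le_left _ _).trans_lt (hg0int.trans ENNReal.one_lt_top)
  set v : E → ℝ≥0∞ := fun x => ⨆ k : ℕ, resOp U (1/(k+1)) h x with hvdef
  have hposk : ∀ k : ℕ, (0:ℝ) < 1/(k+1) := fun k => by positivity
  have hvmeas : Measurable v := Measurable.iSup fun k => measurable_resOp hU (hposk k) hh
  have hvini : ∀ x, iniOp U h x = v x := fun x => iniOp_eq_iSup_nat hU hh x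
  have hKey : ∀ x, resOp U 1 h x + resOp U 1 v x ≤ v x := fun x => key_ineq hU hh hhle x
  have hU1v : ∀ x, resOp U 1 v x ≤ v x := fun x => (self_le_add_left _ _).trans (hKey x)
  set w : ℕ → E → ℝ≥0∞ := fun n y => min (v y) n with hwdef
  have hwmeas : ∀ n, Measurable (w n) := fun n => hvmeas.min measurable_const
  have hwle : ∀ (n : ℕ) y, w n y ≤ n := fun n y => min_le_right _ _
  have hU1w_le_w : ∀ (n : ℕ) y, resOp U 1 (w n) y ≤ w n y := by
    intro n y
    refine le_min ((resOp_mono (fun z => min_le_left _ _) y).trans (hU1v y)) ?_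
    have := resOp_le_const hU one_pos (C := (n:ℝ≥0∞)) (hwle n) y
    simpa using this
  have hU1w_le_n : ∀ (n : ℕ) y, resOp U 1 (w n) y ≤ n := fun n y =>
    (hU1w_le_w n y).trans (hwle n y)
  set cfn : ℕ → E → ℝ≥0∞ := fun n y => w n y - resOp U 1 (w n) y with hcdef
  have hcmeas : ∀ n, Measurable (cfn n) := fun n =>
    (hwmeas n).sub (measurable_resOp hU one_pos (hwmeas n))
  have hcadd : ∀ (n : ℕ) y, cfn n y + resOp U 1 (w n) y = w n y := fun n y =>
    tsub_add_cancel_of_le (hU1w_le_w n y)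
  have hcle : ∀ (n : ℕ) y, cfn n y ≤ n := fun n y => tsub_le_self.trans (hwle n y)
  have hUc : ∀ n : ℕ, ∀ β : ℝ, 0 < β → ∀ x, resOp U β (cfn n) x ≤ n := by
    intro n
    have hlt1 : ∀ β : ℝ, 0 < β → β < 1 → ∀ x, resOp U β (cfn n) x ≤ n := by
      intro β hβ hβ1 x
      set X := resOp U β (resOp U 1 (w n)) x with hX
      have hXfin : X ≠ ⊤ := by
        refine ne_top_of_le_ne_top ?_ (resOp_le_const hU hβ (C := (n:ℝ≥0∞)) (hU1w_le_n n) x)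
        exact ENNReal.mul_ne_top (ENNReal.natCast_ne_top n)
          (by simp [(ENNReal.ofReal_pos.2 hβ).ne'])
      have hfun : (fun y => cfn n y + resOp U 1 (w n) y) = w n := funext (hcadd n)
      have h1 : resOp U β (cfn n) x + X = resOp U β (w n) x := by
        calc resOp U β (cfn n) x + X
            = resOp U β (fun y => cfn n y + resOp U 1 (w n) y) x :=
              (resOp_add (hcmeas n) x).symm
          _ = resOp U β (w n) x := by rw [hfun]
      have hid := hU.2 β 1 hβ hβ1.le (w n) (hwmeas n) x
      have h3 : resOp U β (cfn n) x + X ≤ resOp U 1 (w n) x + X := by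
        rw [h1, hid]
        exact add_le_add_right (mul_le_of_le_one_left zero_le
          (ENNReal.ofReal_le_one.2 (by linarith))) _
      exact ((ENNReal.add_le_add_iff_right hXfin).1 h3).trans (hU1w_le_n n x)
    intro β hβ x
    rcases lt_or_ge β 1 with hβ1 | hβ1
    · exact hlt1 β hβ hβ1 x
    · exact (resOp_anti hU (p := 1/2) (by norm_num) (by linarith) (hcmeas n) x).trans
        (hlt1 (1/2) (by norm_num) (by norm_num) x)
  set Z : Set E := {z | resOp U 1 h z = 0} with hZdef
  have hZmeas : MeasurableSet Z := measurable_resOp hU one_pos hh (measurableSet_singleton 0)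
  set κ : ℕ → ℝ≥0∞ := fun k => (2:ℝ≥0∞)⁻¹ ^ (k+1) * ((k+1 : ℕ) : ℝ≥0∞)⁻¹ with hκdef
  have hκn : ∀ k : ℕ, κ k * ((k+1:ℕ) : ℝ≥0∞) = (2:ℝ≥0∞)⁻¹ ^ (k+1) := by
    intro k
    rw [hκdef, mul_assoc,
      ENNReal.inv_mul_cancel (Nat.cast_ne_zero.2 (Nat.succ_ne_zero k))
        (ENNReal.natCast_ne_top _), mul_one]
  have hgeom : (∑' k : ℕ, (2:ℝ≥0∞)⁻¹ ^ (k+1)) = 1 := by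
    rw [show (fun k : ℕ => (2:ℝ≥0∞)⁻¹ ^ (k+1)) = fun k : ℕ => (2:ℝ≥0∞)⁻¹ ^ k * 2⁻¹ from
      funext fun k => pow_succ _ k]
    rw [ENNReal.tsum_mul_right, ENNReal.tsum_geometric]
    have h12 : (1 - 2⁻¹ : ℝ≥0∞) = 2⁻¹ := by
      refine ENNReal.sub_eq_of_eq_add (by simp) ?_
      rw [ENNReal.inv_two_add_inv_two]
    rw [h12]
    exact ENNReal.inv_mul_cancel (ENNReal.inv_ne_zero.2 ENNReal.ofNat_ne_top)
      (ENNReal.inv_ne_top.2 two_ne_zero)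
  set g : E → ℝ≥0∞ := fun y => (∑' k : ℕ, κ k * cfn (k+1) y) + Z.indicator 1 y with hgdef
  have htsum_meas : Measurable (fun y => ∑' k : ℕ, κ k * cfn (k+1) y) :=
    Measurable.ennreal_tsum fun k => (hcmeas (k+1)).const_mul (κ k)
  have hgmeas : Measurable g := htsum_meas.add (measurable_one.indicator hZmeas)
  have hgle : ∀ y, g y ≤ 2 := by
    intro y
    have h1 : (∑' k : ℕ, κ k * cfn (k+1) y) ≤ 1 := by
      calc (∑' k : ℕ, κ k * cfn (k+1) y) ≤ ∑' k : ℕ, (2:ℝ≥0∞)⁻¹ ^ (k+1) := by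
            refine ENNReal.tsum_le_tsum fun k => ?_
            rw [← hκn k]
            exact mul_le_mul_right (hcle (k+1) y) (κ k)
        _ = 1 := hgeom
    have h2' : Z.indicator (1 : E → ℝ≥0∞) y ≤ 1 := by
      by_cases hy : y ∈ Z <;> simp [hy]
    calc g y ≤ 1 + 1 := add_le_add h1 h2'
      _ = 2 := one_add_one_eq_two
  have hgU : ∀ β : ℝ, 0 < β → ∀ x, resOp U β g x ≤ 1 := by
    intro β hβ x
    have hsplit : resOp U β g x = resOp U β (fun y => ∑' k : ℕ, κ k * cfn (k+1) y) x
        + resOp U β (Z.indicator 1) x := resOp_add htsum_meas x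
    have hz : resOp U β (Z.indicator 1) x = 0 := potential_dead_zero hU hh hhpos hβ x
    have htsum : resOp U β (fun y => ∑' k : ℕ, κ k * cfn (k+1) y) x
        = ∑' k : ℕ, κ k * resOp U β (cfn (k+1)) x := by
      rw [resOp, lintegral_tsum fun k => ((hcmeas (k+1)).const_mul (κ k)).aemeasurable]
      congr 1
      funext k
      exact lintegral_const_mul (κ k) (hcmeas (k+1))
    rw [hsplit, hz, add_zero, htsum]
    calc (∑' k : ℕ, κ k * resOp U β (cfn (k+1)) x) ≤ ∑' k : ℕ, (2:ℝ≥0∞)⁻¹ ^ (k+1) := by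
          refine ENNReal.tsum_le_tsum fun k => ?_
          rw [← hκn k]
          exact mul_le_mul_right (hUc (k+1) β hβ x) (κ k)
      _ = 1 := hgeom
  have hgini : ∀ x, iniOp U g x ≤ 1 := fun x => iSup₂_le fun β hβ => hgU β hβ x
  have hgpos : ∀ x, v x ≠ ⊤ → 0 < g x := by
    intro x hvx
    by_cases hxZ : x ∈ Z
    · have hle1 : (1:ℝ≥0∞) ≤ g x := by
        have hind : Z.indicator (1 : E → ℝ≥0∞) x = 1 := by simp [hxZ]
        calc (1:ℝ≥0∞) = Z.indicator (1 : E → ℝ≥0∞) x := hind.symm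
          _ ≤ g x := self_le_add_left _ _
      exact lt_of_lt_of_le one_pos hle1
    · have hZx : resOp U 1 h x ≠ 0 := hxZ
      obtain ⟨n, hn⟩ := ENNReal.exists_nat_gt hvx
      have hvn : v x < ((n+1:ℕ) : ℝ≥0∞) :=
        hn.trans_le (by exact_mod_cast Nat.cast_le.2 (Nat.le_succ n))
      have hcn : resOp U 1 h x ≤ cfn (n+1) x := by
        have hwx : w (n+1) x = v x := min_eq_left hvn.le
        have hles : resOp U 1 (w (n+1)) x ≤ resOp U 1 v x :=
          resOp_mono (fun z => min_le_left _ _) x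
        have hfin : resOp U 1 v x ≠ ⊤ := ne_top_of_le_ne_top hvx (hU1v x)
        calc resOp U 1 h x ≤ v x - resOp U 1 v x :=
            ENNReal.le_sub_of_add_le_right hfin (hKey x)
          _ ≤ v x - resOp U 1 (w (n+1)) x := tsub_le_tsub_left hles _
          _ = cfn (n+1) x := by rw [hcdef]; simp only [hwx]
      have hterm : (0:ℝ≥0∞) < κ n * cfn (n+1) x := by
        refine ENNReal.mul_pos ?_ ?_
        · exact mul_ne_zero (pow_ne_zero _ (ENNReal.inv_ne_zero.2 ENNReal.ofNat_ne_top))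
            (ENNReal.inv_ne_zero.2 (ENNReal.natCast_ne_top _))
        · exact ((pos_iff_ne_zero.2 hZx).trans_le hcn).ne'
      calc (0:ℝ≥0∞) < κ n * cfn (n+1) x := hterm
        _ ≤ ∑' k : ℕ, κ k * cfn (k+1) x := ENNReal.le_tsum n
        _ ≤ g x := le_self_add
  set M₀ : Set E := {x | v x = ⊤} with hM₀def
  have hM₀meas : MeasurableSet M₀ := hvmeas (measurableSet_singleton ⊤)
  have hM₀null : ξ M₀ = 0 := by
    have hae := h2 h hh hhpos hhint
    have hae' : ∀ᵐ x ∂ξ, v x < ⊤ := hae.mono fun x hx => (hvini x) ▸ hx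
    have hset := ae_iff.1 hae'
    simpa [hM₀def, lt_top_iff_ne_top, not_not] using hset
  set F : Set E := (⋃ k, cleanSeq U M₀ k)ᶜ with hFdef
  have hFmeas : MeasurableSet F :=
    (MeasurableSet.iUnion fun k => cleanSeq_meas hU hM₀meas k).compl
  have hFc : Fᶜ = ⋃ k, cleanSeq U M₀ k := compl_compl _
  have hFnull : ξ Fᶜ = 0 := by
    rw [hFc]
    exact measure_iUnion_null fun k => cleanSeq_null hU hξ hM₀meas hM₀null k
  have habs : ∀ x ∈ F, iniOp U (Fᶜ.indicator 1) x = 0 := by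
    intro x hxF
    have hx : x ∉ ⋃ k, cleanSeq U M₀ k := hxF
    have hzero : ∀ β : ℝ, 0 < β → resOp U β (Fᶜ.indicator 1) x = 0 := by
      intro β hβ
      have hind : Fᶜ.indicator (1 : E → ℝ≥0∞)
          = fun y => ⨆ k : ℕ, (cleanSeq U M₀ k).indicator 1 y := by
        funext y
        by_cases hy : y ∈ Fᶜ
        · rw [Set.indicator_of_mem hy, Pi.one_apply]
          have hy' := hy
          rw [hFc] at hy'
          obtain ⟨k, hk⟩ := Set.mem_iUnion.1 hy'
          refine le_antisymm ?_ (iSup_le fun m => ?_)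
          · refine le_trans ?_
              (le_iSup (fun m : ℕ => (cleanSeq U M₀ m).indicator (1:E→ℝ≥0∞) y) k)
            simp [Set.indicator_of_mem hk]
          · by_cases hm : y ∈ cleanSeq U M₀ m <;> simp [hm]
        · rw [Set.indicator_of_notMem hy]
          have hnot : ∀ k : ℕ, y ∉ cleanSeq U M₀ k := by
            intro k hk
            exact hy (by rw [hFc]; exact Set.mem_iUnion.2 ⟨k, hk⟩)
          symm
          simp [Set.indicator_of_notMem, hnot]
      rw [hind, resOp,
        lintegral_iSup (fun k => measurable_one.indicator (cleanSeq_meas hU hM₀meas k))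
          (fun a b hab y => Set.indicator_le_indicator_of_subset (cleanSeq_mono M₀ hab)
            (fun _ => zero_le) y)]
      have hall : ∀ k : ℕ, resOp U β ((cleanSeq U M₀ k).indicator 1) x = 0 := fun k =>
        cleanSeq_absorb hU hM₀meas hx k hβ
      simp only [resOp] at hall
      simp [hall]
    exact le_antisymm (iSup₂_le fun β hβ => (hzero β hβ).le) zero_le
  refine ⟨F, hFmeas, hFnull, habs, g, hgmeas, ?_, ⟨2, ENNReal.ofNat_lt_top, hgle⟩,
    fun x _ => hgini x⟩
  intro x hxF
  have hxM₀ : x ∉ M₀ := fun hm => hxF (Set.mem_iUnion.2 ⟨0, hm⟩)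
  exact hgpos x hxM₀
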